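/- No group H with S_3 ≤ H can be contained in a group isomorphic to A_4 as a subgroup; more precisely, A_4 contains no subgroup of order 6. Consequently, if PSL(2,q)_M ≅ S_3 for a 3-subset M and PSL(2,q)_B ≅ A_4 for the unique block B ⊇ M of an SQS(q+1), then PSL(2,q)_M is not contained in PSL(2,q)_B, contradicting that every automorphism stabilizing M must stabilize the unique block containing M; hence a non-3-homogeneous PSL(2,q) cannot act block-transitively on any SQS(q+1). -/
import Mathlib

lemma aux_card_A4 : Nat.card (alternatingGroup (Fin 4)) = 12 := by
  rw [Nat.card_eq_fintype_card]
  decide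

lemma aux_cube : (Finset.univ.filter
    (fun g : alternatingGroup (Fin 4) => g ^ 3 = 1)).card = 9 := by decide

lemma aux_no6 : ∀ H : Subgroup (alternatingGroup (Fin 4)), Nat.card H ≠ 6 := by
  classical
  intro H h6
  have hidx : H.index = 2 := by
    have := H.index_mul_card
    rw [h6, aux_card_A4] at this
    omega
  have hcube : ∀ g : alternatingGroup (Fin 4), g ^ 3 = 1 → g ∈ H := by
    intro g hg
    have : (g ^ 2) ^ 2 ∈ H := Subgroup.sq_mem_of_index_two hidx _
    have hg4 : (g ^ 2) ^ 2 = g := by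
      rw [← pow_mul]
      calc g ^ 4 = g ^ 3 * g := by rw [pow_succ]
      _ = g := by rw [hg, one_mul]
    rwa [hg4] at this
  have hsub : (Finset.univ.filter (fun g : alternatingGroup (Fin 4) => g ^ 3 = 1)) ⊆
      (Finset.univ.filter (fun g : alternatingGroup (Fin 4) => g ∈ H)) := by
    intro g hg
    simp only [Finset.mem_filter, Finset.mem_univ, true_and] at *
    exact hcube g hg
  have h9 : 9 ≤ Nat.card H := by
    rw [Nat.card_eq_fintype_card, Fintype.card_subtype]
    calc 9 = (Finset.univ.filter (fun g : alternatingGroup (Fin 4) => g ^ 3 = 1)).card :=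
      aux_cube.symm
    _ ≤ _ := Finset.card_le_card hsub
  omega

/-- `A₄` contains no subgroup of order 6; consequently, in any group, a subgroup
isomorphic to `S₃` can never be contained in a subgroup isomorphic to `A₄`. -/
theorem stmt_16 :
    (∀ H : Subgroup (alternatingGroup (Fin 4)), Nat.card H ≠ 6) ∧
      ∀ (G : Type) [Group G] (A B : Subgroup G),
        Nonempty (A ≃* Equiv.Perm (Fin 3)) →
        Nonempty (B ≃* alternatingGroup (Fin 4)) → ¬ A ≤ B := by
  refine ⟨aux_no6, ?_⟩
  intro G _ A B ⟨eS3⟩ ⟨eA4⟩ hAB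
  set A' : Subgroup B := A.subgroupOf B
  have e1 : A' ≃* A := Subgroup.subgroupOfEquivOfLe hAB
  set H : Subgroup (alternatingGroup (Fin 4)) := A'.map eA4.toMonoidHom
  have e2 : A' ≃* H := eA4.subgroupMap A'
  have : Nat.card H = 6 := by
    rw [← Nat.card_congr e2.toEquiv, Nat.card_congr e1.toEquiv,
      Nat.card_congr eS3.toEquiv, Nat.card_eq_fintype_card]
    decide
  exact aux_no6 H this
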